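/- arXiv:2310.10816 — 5 statements merged into one kernel-verified Lean document; each statement's English description precedes it below -/
import Mathlib

section
/- For any triangle in the Euclidean plane with circumradius R, inradius r, and distance d between circumcenter and incenter, we have R^2 - 2Rr = d^2 (Euler's formula). -/
open EuclideanGeometry Affine

lemma dist_sq_coord (X Y : EuclideanSpace ℝ (Fin 2)) :
    dist X Y ^ 2 = (X 0 - Y 0) ^ 2 + (X 1 - Y 1) ^ 2 := by
  rw [EuclideanSpace.dist_eq, Real.sq_sqrt (by positivity)]
  simp [Fin.sum_univ_two, Real.dist_eq, sq_abs]

lemma infDist_line_mul (B C I : EuclideanSpace ℝ (Fin 2)) (h : B ≠ C) :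
    Metric.infDist I (affineSpan ℝ ({B, C} : Set (EuclideanSpace ℝ (Fin 2))) :
      Set (EuclideanSpace ℝ (Fin 2))) * dist B C =
    |(C 0 - B 0) * (I 1 - B 1) - (C 1 - B 1) * (I 0 - B 0)| := by
  set L : ℝ := dist B C with hLdef
  have hL : 0 < L := dist_pos.mpr h
  have hL2 : L ^ 2 = (C 0 - B 0) ^ 2 + (C 1 - B 1) ^ 2 := by
    rw [hLdef, dist_comm]; exact dist_sq_coord C B
  set cr : ℝ := (C 0 - B 0) * (I 1 - B 1) - (C 1 - B 1) * (I 0 - B 0) with hcr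
  -- distance from I to a generic point on the line
  have hdist : ∀ t : ℝ, |cr| ≤ dist I (t • (C -ᵥ B) +ᵥ B) * L := by
    intro t
    have h1 : (dist I (t • (C -ᵥ B) +ᵥ B) * L) ^ 2 =
        cr ^ 2 + ((C 0 - B 0) * (I 0 - B 0 - t * (C 0 - B 0))
          + (C 1 - B 1) * (I 1 - B 1 - t * (C 1 - B 1))) ^ 2 := by
      have h2 := dist_sq_coord I (t • (C -ᵥ B) +ᵥ B)
      have e0 : (t • (C -ᵥ B) +ᵥ B) 0 = B 0 + t * (C 0 - B 0) := by
        simp [vsub_eq_sub, vadd_eq_add, PiLp.add_apply, PiLp.smul_apply, smul_eq_mul]; ring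
      have e1 : (t • (C -ᵥ B) +ᵥ B) 1 = B 1 + t * (C 1 - B 1) := by
        simp [vsub_eq_sub, vadd_eq_add, PiLp.add_apply, PiLp.smul_apply, smul_eq_mul]; ring
      rw [e0, e1] at h2
      rw [mul_pow, h2, hL2, hcr]; ring
    have h3 : |cr| ^ 2 ≤ (dist I (t • (C -ᵥ B) +ᵥ B) * L) ^ 2 := by
      rw [h1, sq_abs]
      exact le_add_of_nonneg_right (sq_nonneg _)
    have := Real.sqrt_le_sqrt h3
    rwa [Real.sqrt_sq (abs_nonneg _), Real.sqrt_sq (by positivity)] at this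
  -- every point of the line has this form
  have hmem : ∀ p, p ∈ (affineSpan ℝ ({B, C} : Set (EuclideanSpace ℝ (Fin 2))) :
      Set (EuclideanSpace ℝ (Fin 2))) → ∃ t : ℝ, p = t • (C -ᵥ B) +ᵥ B := by
    intro p hp
    have hp' : (p -ᵥ B) +ᵥ B ∈ affineSpan ℝ ({B, C} : Set (EuclideanSpace ℝ (Fin 2))) := by
      rwa [vsub_vadd]
    obtain ⟨t, ht⟩ := (vadd_left_mem_affineSpan_pair).mp hp'
    exact ⟨t, by rw [ht, vsub_vadd]⟩
  have hne : (affineSpan ℝ ({B, C} : Set (EuclideanSpace ℝ (Fin 2))) :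
      Set (EuclideanSpace ℝ (Fin 2))).Nonempty :=
    ⟨B, left_mem_affineSpan_pair ℝ B C⟩
  refine le_antisymm ?_ ?_
  · -- upper bound via the foot of the perpendicular
    set t0 : ℝ := ((C 0 - B 0) * (I 0 - B 0) + (C 1 - B 1) * (I 1 - B 1)) / L ^ 2 with ht0
    have hQmem : t0 • (C -ᵥ B) +ᵥ B ∈ (affineSpan ℝ ({B, C} : Set (EuclideanSpace ℝ (Fin 2))) :
        Set (EuclideanSpace ℝ (Fin 2))) := smul_vsub_vadd_mem_affineSpan_pair t0 B C
    have hle := Metric.infDist_le_dist_of_mem (x := I) hQmem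
    have heq : dist I (t0 • (C -ᵥ B) +ᵥ B) * L = |cr| := by
      have h1 : (dist I (t0 • (C -ᵥ B) +ᵥ B) * L) ^ 2 = cr ^ 2 := by
        have h2 := dist_sq_coord I (t0 • (C -ᵥ B) +ᵥ B)
        have e0 : (t0 • (C -ᵥ B) +ᵥ B) 0 = B 0 + t0 * (C 0 - B 0) := by
          simp [vsub_eq_sub, vadd_eq_add, PiLp.add_apply, PiLp.smul_apply, smul_eq_mul]; ring
        have e1 : (t0 • (C -ᵥ B) +ᵥ B) 1 = B 1 + t0 * (C 1 - B 1) := by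
          simp [vsub_eq_sub, vadd_eq_add, PiLp.add_apply, PiLp.smul_apply, smul_eq_mul]; ring
        rw [e0, e1] at h2
        have hL2ne : (L : ℝ) ^ 2 ≠ 0 := by positivity
        have ht0' : t0 * L ^ 2 = (C 0 - B 0) * (I 0 - B 0) + (C 1 - B 1) * (I 1 - B 1) := by
          rw [ht0]; field_simp
        have hzero : (C 0 - B 0) * (I 0 - B 0 - t0 * (C 0 - B 0))
            + (C 1 - B 1) * (I 1 - B 1 - t0 * (C 1 - B 1)) = 0 := by
          linear_combination (-1 : ℝ) * ht0' + t0 * hL2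
        rw [mul_pow, h2, hL2, hcr]
        linear_combination ((C 0 - B 0) * (I 0 - B 0 - t0 * (C 0 - B 0))
            + (C 1 - B 1) * (I 1 - B 1 - t0 * (C 1 - B 1))) * hzero
      have := congrArg Real.sqrt h1
      rwa [Real.sqrt_sq (by positivity), Real.sqrt_sq_eq_abs] at this
    calc Metric.infDist I _ * L ≤ dist I (t0 • (C -ᵥ B) +ᵥ B) * L := by
          exact mul_le_mul_of_nonneg_right hle hL.le
      _ = |cr| := heq
  · -- lower bound
    rw [← div_le_iff₀ hL]
    have this' : ∀ q ∈ (affineSpan ℝ ({B, C} : Set (EuclideanSpace ℝ (Fin 2))) :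
        Set (EuclideanSpace ℝ (Fin 2))), |cr| / L ≤ dist I q := by
      intro q hq
      obtain ⟨t, rfl⟩ := hmem q hq
      rw [div_le_iff₀ hL]
      exact hdist t
    rw [Metric.infDist_eq_iInf]
    obtain ⟨p0, hp0⟩ := hne
    have : Nonempty ((affineSpan ℝ ({B, C} : Set (EuclideanSpace ℝ (Fin 2)))) :
      Set (EuclideanSpace ℝ (Fin 2))) := ⟨⟨p0, hp0⟩⟩
    exact le_ciInf fun q => this' q.1 q.2


lemma euler_algebra
    (a1 a2 b1 b2 c1 c2 o1 o2 R r a b c α β γ i1 i2 : ℝ)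
    (hR : 0 ≤ R) (hr : 0 < r)
    (hRA : (a1-o1)^2+(a2-o2)^2 = R^2) (hRB : (b1-o1)^2+(b2-o2)^2 = R^2)
    (hRC : (c1-o1)^2+(c2-o2)^2 = R^2)
    (ha2 : a^2 = (b1-c1)^2+(b2-c2)^2) (hb2 : b^2 = (c1-a1)^2+(c2-a2)^2)
    (hc2 : c^2 = (a1-b1)^2+(a2-b2)^2)
    (ha : 0 < a) (hb : 0 < b) (hc : 0 < c)
    (hα : 0 ≤ α) (hβ : 0 ≤ β) (hγ : 0 ≤ γ) (hsum : α+β+γ = 1)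
    (hi1 : i1 = α*a1+β*b1+γ*c1) (hi2 : i2 = α*a2+β*b2+γ*c2)
    (hDA : r * a = |(c1-b1)*(i2-b2) - (c2-b2)*(i1-b1)|)
    (hDB : r * b = |(a1-c1)*(i2-c2) - (a2-c2)*(i1-c1)|)
    (hDC : r * c = |(b1-a1)*(i2-a2) - (b2-a2)*(i1-a1)|) :
    R^2 - 2*R*r = (o1-i1)^2+(o2-i2)^2 := by
  obtain rfl : γ = 1 - α - β := by linarith
  set s : ℝ := (b1-a1)*(c2-a2) - (c1-a1)*(b2-a2) with hs
  set σ : ℝ := |s| with hσ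
  have hσ0 : 0 ≤ σ := abs_nonneg s
  have h1 : σ^2 = s^2 := sq_abs s
  have hA' : r * a = α * σ := by
    rw [hDA, show (c1-b1)*(i2-b2) - (c2-b2)*(i1-b1) = α*s by
      rw [hi1, hi2, hs]; ring, abs_mul, abs_of_nonneg hα]
  have hB' : r * b = β * σ := by
    rw [hDB, show (a1-c1)*(i2-c2) - (a2-c2)*(i1-c1) = β*s by
      rw [hi1, hi2, hs]; ring, abs_mul, abs_of_nonneg hβ]
  have hC' : r * c = (1-α-β) * σ := by
    rw [hDC, show (b1-a1)*(i2-a2) - (b2-a2)*(i1-a1) = (1-α-β)*s by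
      rw [hi1, hi2, hs]; ring, abs_mul, abs_of_nonneg hγ]
  have hsσ : σ = r*(a+b+c) := by linear_combination (-1 : ℝ)*hA' - hB' - hC'
  have hσpos : 0 < σ := by
    rw [hsσ]; exact mul_pos hr (by linarith)
  have hsq : (a*b*c)^2 = (2*R*σ)^2 := by
    linear_combination (b^2*c^2)*ha2 + (((b1-o1)-(c1-o1))^2+((b2-o2)-(c2-o2))^2)*c^2*hb2 + (((b1-o1)-(c1-o1))^2+((b2-o2)-(c2-o2))^2)*(((c1-o1)-(a1-o1))^2+((c2-o2)-(a2-o2))^2)*hc2 + ((2*R^2-2*((b1-o1)*(c1-o1)+(b2-o2)*(c2-o2)))*(((a1-o1)-(b1-o1))^2+((a2-o2)-(b2-o2))^2) + (2*R^2-2*((b1-o1)*(c1-o1)+(b2-o2)*(c2-o2)))*(2*R^2-2*((c1-o1)*(a1-o1)+(c2-o2)*(a2-o2))) + 4*(R^2*R^2-((b1-o1)*(c1-o1)+(b2-o2)*(c2-o2))*((b1-o1)*(c1-o1)+(b2-o2)*(c2-o2))) - 4*R^2*(((c1-o1)^2+(c2-o2)^2)+R^2-2*((b1-o1)*(c1-o1)+(b2-o2)*(c2-o2))))*hRA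 + ((((c1-o1)-(a1-o1))^2+((c2-o2)-(a2-o2))^2)*(((a1-o1)-(b1-o1))^2+((a2-o2)-(b2-o2))^2) + (2*R^2-2*((b1-o1)*(c1-o1)+(b2-o2)*(c2-o2)))*(2*R^2-2*((c1-o1)*(a1-o1)+(c2-o2)*(a2-o2))) + 4*(((a1-o1)^2+(a2-o2)^2)*R^2-((c1-o1)*(a1-o1)+(c2-o2)*(a2-o2))*((c1-o1)*(a1-o1)+(c2-o2)*(a2-o2))) - 4*R^2*(((a1-o1)^2+(a2-o2)^2)+R^2-2*((c1-o1)*(a1-o1)+(c2-o2)*(a2-o2))))*hRB + ((((c1-o1)-(a1-o1))^2+((c2-o2)-(a2-o2))^2)*(((a1-o1)-(b1-o1))^2+((a2-o2)-(b2-o2))^2) + (2*R^2-2*((b1-o1)*(c1-o1)+(b2-o2)*(c2-o2)))*(((a1-o1)-(b1-o1))^2+((a2-o2)-(b2-o2))^2) + 4*(((a1-o1)^2+(a2-o2)^2)*((b1-o1)^2+(b2-o2)^2)-((a1-o1)*(b1-o1)+(a2-o2)*(b2-o2))*((a1-o1)*(b1-o1)+(a2-o2)*(b2-o2))) - 4*R^2*(((b1-o1)^2+(b2-o2)^2)+R^2-2*((a1-o1)*(b1-o1)+(a2-o2)*(b2-o2))))*hRC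 + (-4*R^2)*h1
  have habc : a*b*c = 2*R*σ := by
    have h2 := congrArg Real.sqrt hsq
    rwa [Real.sqrt_sq (by positivity), Real.sqrt_sq
      (mul_nonneg (mul_nonneg (by norm_num) hR) hσ0)] at h2
  have hd : (o1-i1)^2+(o2-i2)^2 =
      R^2 - (α*β*c^2 + β*(1-α-β)*a^2 + (1-α-β)*α*b^2) := by
    rw [hi1, hi2]
    linear_combination α*hRA + β*hRB + (1-α-β)*hRC + α*β*hc2 + β*(1-α-β)*ha2 + (1-α-β)*α*hb2
  have hfin : (α*β*c^2 + β*(1-α-β)*a^2 + (1-α-β)*α*b^2) * σ^2 = (2*R*r) * σ^2 := by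
    linear_combination (-β*σ*c^2 - r*c*b^2)*hA' + (-r*a*c^2 - (1-α-β)*σ*a^2)*hB'
      + (-r*b*a^2 - α*σ*b^2)*hC' + (r^2*(a+b+c))*habc + (-2*R*r*σ)*hsσ
  have hcancel : α*β*c^2 + β*(1-α-β)*a^2 + (1-α-β)*α*b^2 = 2*R*r :=
    mul_right_cancel₀ (pow_ne_zero 2 hσpos.ne') hfin
  rw [hd, hcancel]

/-- Euler's formula: for a triangle with circumradius `R`, inradius `r`, and distance `d`
between circumcenter and incenter, `R^2 - 2Rr = d^2`. The incenter `I` with inradius `r` is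
characterized as a point inside the triangle at distance `r` from each side line. -/
theorem euler_triangle_formula
    (T : Affine.Simplex ℝ (EuclideanSpace ℝ (Fin 2)) 2)
    (I : EuclideanSpace ℝ (Fin 2)) (r : ℝ) (hr : 0 < r)
    (hI : I ∈ convexHull ℝ (Set.range T.points))
    (hdist : ∀ i : Fin 3,
      Metric.infDist I (affineSpan ℝ (T.points '' {j | j ≠ i}) : Set (EuclideanSpace ℝ (Fin 2))) = r) :
    T.circumradius ^ 2 - 2 * T.circumradius * r = dist T.circumcenter I ^ 2 := by
  have hinj : Function.Injective T.points := T.independent.injective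
  set A := T.points 0 with hA
  set B := T.points 1 with hB
  set C := T.points 2 with hC
  have hBC : B ≠ C := fun h => by simpa using hinj h
  have hCA : C ≠ A := fun h => by simpa using hinj h
  have hAB : A ≠ B := fun h => by simpa using hinj h
  -- side sets
  have him0 : T.points '' {j | j ≠ 0} = ({B, C} : Set (EuclideanSpace ℝ (Fin 2))) := by
    have : {j : Fin 3 | j ≠ 0} = ({1, 2} : Set (Fin 3)) := by
      ext j; fin_cases j <;> simp
    rw [this, Set.image_pair]
  have him1 : T.points '' {j | j ≠ 1} = ({C, A} : Set (EuclideanSpace ℝ (Fin 2))) := by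
    have : {j : Fin 3 | j ≠ 1} = ({2, 0} : Set (Fin 3)) := by
      ext j; fin_cases j <;> simp
    rw [this, Set.image_pair]
  have him2 : T.points '' {j | j ≠ 2} = ({A, B} : Set (EuclideanSpace ℝ (Fin 2))) := by
    have : {j : Fin 3 | j ≠ 2} = ({0, 1} : Set (Fin 3)) := by
      ext j; fin_cases j <;> simp
    rw [this, Set.image_pair]
  have hd0 := hdist 0; rw [him0] at hd0
  have hd1 := hdist 1; rw [him1] at hd1
  have hd2 := hdist 2; rw [him2] at hd2
  have hDA := infDist_line_mul B C I hBC; rw [hd0] at hDA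
  have hDB := infDist_line_mul C A I hCA; rw [hd1] at hDB
  have hDC := infDist_line_mul A B I hAB; rw [hd2] at hDC
  -- circumcenter
  set O := T.circumcenter with hO
  set R := T.circumradius with hR
  have hRnn : 0 ≤ R := T.circumradius_nonneg
  have hRA : (A 0 - O 0)^2 + (A 1 - O 1)^2 = R^2 := by
    rw [← dist_sq_coord A O, hA, hO, hR, T.dist_circumcenter_eq_circumradius 0]
  have hRB : (B 0 - O 0)^2 + (B 1 - O 1)^2 = R^2 := by
    rw [← dist_sq_coord B O, hB, hO, hR, T.dist_circumcenter_eq_circumradius 1]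
  have hRC : (C 0 - O 0)^2 + (C 1 - O 1)^2 = R^2 := by
    rw [← dist_sq_coord C O, hC, hO, hR, T.dist_circumcenter_eq_circumradius 2]
  -- weights
  rw [convexHull_range_eq_exists_affineCombination] at hI
  obtain ⟨sF, w, hw0, hw1, hx⟩ := hI
  rw [Finset.affineCombination_eq_linear_combination _ _ _ hw1] at hx
  set w' : Fin 3 → ℝ := fun i => if i ∈ sF then w i else 0 with hw'
  have hw'0 : ∀ i, 0 ≤ w' i := by
    intro i; by_cases h : i ∈ sF <;> simp [hw', h]
    exact hw0 i h
  have hw'sum : w' 0 + w' 1 + w' 2 = 1 := by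
    have : ∑ i, w' i = 1 := by
      rw [hw']
      rw [Finset.sum_ite_mem, Finset.univ_inter, hw1]
    simpa [Fin.sum_univ_three] using this
  have hxI : w' 0 • A + w' 1 • B + w' 2 • C = I := by
    have : ∑ i, w' i • T.points i = I := by
      rw [hw', ← hx]
      rw [show (∑ i, (if i ∈ sF then w i else 0) • T.points i)
          = ∑ i ∈ Finset.univ, (if i ∈ sF then w i • T.points i else 0) by
        refine Finset.sum_congr rfl fun i _ => ?_
        by_cases h : i ∈ sF <;> simp [h]]
      rw [Finset.sum_ite_mem, Finset.univ_inter]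
    simpa [Fin.sum_univ_three, hA, hB, hC] using this
  have hi1 : I 0 = w' 0 * A 0 + w' 1 * B 0 + w' 2 * C 0 := by
    rw [← hxI]; simp [PiLp.add_apply, PiLp.smul_apply, smul_eq_mul]
  have hi2 : I 1 = w' 0 * A 1 + w' 1 * B 1 + w' 2 * C 1 := by
    rw [← hxI]; simp [PiLp.add_apply, PiLp.smul_apply, smul_eq_mul]
  -- side lengths
  have ha2 := dist_sq_coord B C
  have hb2 := dist_sq_coord C A
  have hc2 := dist_sq_coord A B
  have hapos : 0 < dist B C := dist_pos.mpr hBC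
  have hbpos : 0 < dist C A := dist_pos.mpr hCA
  have hcpos : 0 < dist A B := dist_pos.mpr hAB
  rw [dist_sq_coord O I]
  exact euler_algebra (A 0) (A 1) (B 0) (B 1) (C 0) (C 1) (O 0) (O 1) R r
    (dist B C) (dist C A) (dist A B) (w' 0) (w' 1) (w' 2) (I 0) (I 1)
    hRnn hr hRA hRB hRC ha2 hb2 hc2 hapos hbpos hcpos
    (hw'0 0) (hw'0 1) (hw'0 2) hw'sum hi1 hi2 hDA hDB hDC
end

section
/- Let X, Y, Z, T be reals satisfying X - T > |Z - Y| > 0, X + T > |Z + Y| > 0, and XT - ZY > 0. Then there exist reals K, L, t, s such that the 2x2 matrix [[X, Y], [Z, T]] equals [[cosh t, sinh t],[sinh t, cosh t]] * [[K, 0],[0, L]] * [[cosh s, sinh s],[sinh s, cosh s]], with K - L = sqrt((X-T)^2 - (Z-Y)^2) and K > L > 0 (Lorentz singular value decomposition). -/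
open Real Matrix

set_option maxHeartbeats 1000000 in
/-- Lorentz singular value decomposition of a 2×2 matrix satisfying the stated inequalities. -/
theorem lorentz_svd
    (X Y Z T : ℝ)
    (h1 : X - T > |Z - Y|) (h1' : |Z - Y| > 0)
    (h2 : X + T > |Z + Y|) (h2' : |Z + Y| > 0)
    (h3 : X * T - Z * Y > 0) :
    ∃ K L t s : ℝ,
      !![X, Y; Z, T] =
        !![Real.cosh t, Real.sinh t; Real.sinh t, Real.cosh t] * !![K, 0; 0, L] *
          !![Real.cosh s, Real.sinh s; Real.sinh s, Real.cosh s] ∧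
      K - L = Real.sqrt ((X - T) ^ 2 - (Z - Y) ^ 2) ∧ K > L ∧ L > 0 := by
  have habsp := abs_nonneg (Z + Y)
  have habsm := abs_nonneg (Z - Y)
  have hsqp : (Z + Y) ^ 2 < (X + T) ^ 2 := by nlinarith [sq_abs (Z + Y)]
  have hsqm : (Z - Y) ^ 2 < (X - T) ^ 2 := by nlinarith [sq_abs (Z - Y)]
  set A := Real.sqrt ((X + T) ^ 2 - (Z + Y) ^ 2) with hAdef
  set B := Real.sqrt ((X - T) ^ 2 - (Z - Y) ^ 2) with hBdef
  have hA : 0 < A := Real.sqrt_pos.mpr (by linarith)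
  have hB : 0 < B := Real.sqrt_pos.mpr (by linarith)
  have hA2 : A ^ 2 = (X + T) ^ 2 - (Z + Y) ^ 2 := Real.sq_sqrt (by linarith)
  have hB2 : B ^ 2 = (X - T) ^ 2 - (Z - Y) ^ 2 := Real.sq_sqrt (by linarith)
  set u := Real.arsinh ((Z + Y) / A) with hudef
  set v := Real.arsinh ((Z - Y) / B) with hvdef
  have hsinhu : Real.sinh u = (Z + Y) / A := Real.sinh_arsinh _
  have hsinhv : Real.sinh v = (Z - Y) / B := Real.sinh_arsinh _
  have hcoshu : Real.cosh u = (X + T) / A := by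
    rw [hudef, Real.cosh_arsinh,
      show 1 + ((Z + Y) / A) ^ 2 = ((X + T) / A) ^ 2 by
        field_simp
        nlinarith]
    exact Real.sqrt_sq (div_nonneg (by linarith) hA.le)
  have hcoshv : Real.cosh v = (X - T) / B := by
    rw [hvdef, Real.cosh_arsinh,
      show 1 + ((Z - Y) / B) ^ 2 = ((X - T) / B) ^ 2 by
        field_simp
        nlinarith]
    exact Real.sqrt_sq (div_nonneg (by linarith) hB.le)
  clear_value A B u v
  refine ⟨(A + B) / 2, (A - B) / 2, (u + v) / 2, (u - v) / 2, ?_, by ring, by linarith,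
    ?_⟩
  · set t := (u + v) / 2 with htdef
    set s := (u - v) / 2 with hsdef
    have hE1 : (Real.cosh t * Real.cosh s + Real.sinh t * Real.sinh s) * A = X + T := by
      have h := Real.cosh_add t s
      rw [show t + s = u by rw [htdef, hsdef]; ring, hcoshu] at h
      field_simp at h
      linarith [h]
    have hE2 : (Real.cosh t * Real.cosh s - Real.sinh t * Real.sinh s) * B = X - T := by
      have h := Real.cosh_sub t s
      rw [show t - s = v by rw [htdef, hsdef]; ring, hcoshv] at h
      field_simp at h
      linarith [h]
    have hE3 : (Real.sinh t * Real.cosh s + Real.cosh t * Real.sinh s) * A = Z + Y := by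
      have h := Real.sinh_add t s
      rw [show t + s = u by rw [htdef, hsdef]; ring, hsinhu] at h
      field_simp at h
      linarith [h]
    have hE4 : (Real.sinh t * Real.cosh s - Real.cosh t * Real.sinh s) * B = Z - Y := by
      have h := Real.sinh_sub t s
      rw [show t - s = v by rw [htdef, hsdef]; ring, hsinhv] at h
      field_simp at h
      linarith [h]
    ext i j
    fin_cases i <;> fin_cases j <;>
      simp [Matrix.mul_apply, Fin.sum_univ_two]
    · linear_combination (-(1:ℝ)/2) * hE1 + (-(1:ℝ)/2) * hE2
    · linear_combination (-(1:ℝ)/2) * hE3 + ((1:ℝ)/2) * hE4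
    · linear_combination (-(1:ℝ)/2) * hE3 + (-(1:ℝ)/2) * hE4
    · linear_combination (-(1:ℝ)/2) * hE1 + ((1:ℝ)/2) * hE2
  · -- L > 0, i.e. A > B, since A^2 - B^2 = 4(XT - ZY) > 0
    have hlt : B ^ 2 < A ^ 2 := by nlinarith [hA2, hB2, h3]
    nlinarith [hlt, hA, hB]
end

section
/- The matrix [[0,1],[1,0]] admits no Lorentz singular value decomposition: there exist no reals K, L, t, s with [[0,1],[1,0]] = [[cosh t, sinh t],[sinh t, cosh t]] * [[K,0],[0,L]] * [[cosh s, sinh s],[sinh s, cosh s]]. -/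
open Real Matrix

/-- The matrix `[[0,1],[1,0]]` admits no Lorentz singular value decomposition. -/
theorem no_lorentz_svd_of_swap :
    ¬ ∃ K L t s : ℝ,
      (!![0, 1; 1, 0] : Matrix (Fin 2) (Fin 2) ℝ) =
        !![Real.cosh t, Real.sinh t; Real.sinh t, Real.cosh t] * !![K, 0; 0, L] *
          !![Real.cosh s, Real.sinh s; Real.sinh s, Real.cosh s] := by
  rintro ⟨K, L, t, s, h⟩
  have e00 := congrFun (congrFun h 0) 0
  have e01 := congrFun (congrFun h 0) 1
  have e11 := congrFun (congrFun h 1) 1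
  simp [Matrix.mul_apply, Fin.sum_univ_two] at e00 e01 e11
  have hsum : (K + L) * (Real.cosh t * Real.cosh s + Real.sinh t * Real.sinh s) = 0 := by
    nlinarith [e00, e11]
  have hdiff : (K - L) * (Real.cosh t * Real.cosh s - Real.sinh t * Real.sinh s) = 0 := by
    nlinarith [e00, e11]
  have hp : 0 < Real.cosh t * Real.cosh s + Real.sinh t * Real.sinh s := by
    have := Real.cosh_pos (x := t + s)
    rwa [Real.cosh_add] at this
  have hq : 0 < Real.cosh t * Real.cosh s - Real.sinh t * Real.sinh s := by
    have := Real.cosh_pos (x := t - s)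
    rwa [Real.cosh_sub] at this
  have hK : K = 0 := by
    rcases mul_eq_zero.mp hsum with h1 | h1
    · rcases mul_eq_zero.mp hdiff with h2 | h2
      · linarith
      · linarith
    · linarith
  have hL : L = 0 := by
    rcases mul_eq_zero.mp hsum with h1 | h1
    · linarith
    · linarith
  rw [hK, hL] at e01
  nlinarith [e01]
end

section
/- Let n >= 3 and let U, V be invertible n x n real matrices whose first rows contain only positive entries. Let M = diag(m_1, -m_2, ..., -m_n) with all m_i > 0. If all diagonal entries of U^T M U and of V^T M V are zero, and U^T V is a diagonal matrix with all diagonal entries positive, then Tr(M) >= 0, i.e., m_1 >= m_2 + ... + m_n. -/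
open Matrix BigOperators

private lemma bform_nonneg {n : ℕ} [NeZero n] (m : Fin n → ℝ) (hm : ∀ i, 0 < m i)
    (u v : Fin n → ℝ) (hu0 : 0 < u 0) (hv0 : 0 < v 0)
    (hu : ∑ j, (if j = 0 then m j else -(m j)) * (u j * u j) = 0)
    (hv : ∑ j, (if j = 0 then m j else -(m j)) * (v j * v j) = 0) :
    0 ≤ ∑ j, (if j = 0 then m j else -(m j)) * (u j * v j) := by
  classical
  set s : Finset (Fin n) := Finset.univ.erase 0 with hs
  have hsplit : ∀ (w z : Fin n → ℝ),
      ∑ j, (if j = 0 then m j else -(m j)) * (w j * z j)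
        = m 0 * (w 0 * z 0) - ∑ j ∈ s, m j * (w j * z j) := by
    intro w z
    have hite : ∑ j ∈ s, (if j = 0 then m j else -(m j)) * (w j * z j)
        = -∑ j ∈ s, m j * (w j * z j) := by
      rw [← Finset.sum_neg_distrib]
      refine Finset.sum_congr rfl fun j hj => ?_
      rw [if_neg (Finset.ne_of_mem_erase hj)]; ring
    rw [← Finset.add_sum_erase _ _ (Finset.mem_univ (0 : Fin n)), if_pos rfl, ← hs, hite]
    ring
  have hu' : m 0 * (u 0 * u 0) = ∑ j ∈ s, m j * (u j * u j) := by
    have h := hsplit u u; rw [hu] at h; linarith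
  have hv' : m 0 * (v 0 * v 0) = ∑ j ∈ s, m j * (v j * v j) := by
    have h := hsplit v v; rw [hv] at h; linarith
  rw [hsplit u v]
  have hCS := Finset.sum_mul_sq_le_sq_mul_sq s (fun j => Real.sqrt (m j) * u j)
      (fun j => Real.sqrt (m j) * v j)
  have hsq : ∀ j : Fin n, Real.sqrt (m j) * Real.sqrt (m j) = m j := fun j =>
    Real.mul_self_sqrt (hm j).le
  have h1 : ∑ j ∈ s, (Real.sqrt (m j) * u j) * (Real.sqrt (m j) * v j)
      = ∑ j ∈ s, m j * (u j * v j) := by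
    refine Finset.sum_congr rfl fun j _ => ?_
    rw [show (Real.sqrt (m j) * u j) * (Real.sqrt (m j) * v j)
        = (Real.sqrt (m j) * Real.sqrt (m j)) * (u j * v j) by ring, hsq j]
  have h2 : ∑ j ∈ s, (Real.sqrt (m j) * u j) ^ 2 = ∑ j ∈ s, m j * (u j * u j) := by
    refine Finset.sum_congr rfl fun j _ => ?_
    rw [show (Real.sqrt (m j) * u j) ^ 2
        = (Real.sqrt (m j) * Real.sqrt (m j)) * (u j * u j) by ring, hsq j]
  have h3 : ∑ j ∈ s, (Real.sqrt (m j) * v j) ^ 2 = ∑ j ∈ s, m j * (v j * v j) := by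
    refine Finset.sum_congr rfl fun j _ => ?_
    rw [show (Real.sqrt (m j) * v j) ^ 2
        = (Real.sqrt (m j) * Real.sqrt (m j)) * (v j * v j) by ring, hsq j]
  rw [h1, h2, h3, ← hu', ← hv'] at hCS
  have hm0 := hm 0
  nlinarith [hCS, mul_pos hu0 hv0, mul_pos (mul_pos hm0 hu0) hv0,
    mul_pos (mul_pos hm0 (mul_pos hu0 hv0)) (mul_pos hu0 hv0)]

/-- Key trace lemma: with `M = diag(m₁, -m₂, …, -mₙ)`, `mᵢ > 0`, if `UᵀMU` and `VᵀMV` have zero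
diagonals, `U, V` are invertible with positive first rows, and `UᵀV` is diagonal with positive
diagonal, then `Tr M ≥ 0`, i.e. `m₁ ≥ m₂ + ⋯ + mₙ`. -/
theorem trace_nonneg_of_polar
    (n : ℕ) (hn : 3 ≤ n) (hn0 : NeZero n)
    (U V : Matrix (Fin n) (Fin n) ℝ)
    (hU : IsUnit U.det) (hV : IsUnit V.det)
    (hUrow : ∀ j, 0 < U 0 j) (hVrow : ∀ j, 0 < V 0 j)
    (m : Fin n → ℝ) (hm : ∀ i, 0 < m i)
    (M : Matrix (Fin n) (Fin n) ℝ)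
    (hM : M = Matrix.diagonal (fun i => if i = 0 then m i else -(m i)))
    (hUdiag : ∀ i, (Uᵀ * M * U) i i = 0)
    (hVdiag : ∀ i, (Vᵀ * M * V) i i = 0)
    (hUV : (Uᵀ * V).IsDiag) (hUVpos : ∀ i, 0 < (Uᵀ * V) i i) :
    0 ≤ M.trace ∧ ∑ i ∈ Finset.univ.erase 0, m i ≤ m 0 := by
  classical
  -- quadratic form expansion
  have hquad : ∀ (A B : Matrix (Fin n) (Fin n) ℝ) (i : Fin n),
      (Aᵀ * M * B) i i = ∑ j, (if j = 0 then m j else -(m j)) * (A j i * B j i) := by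
    intro A B i
    rw [hM, Matrix.mul_assoc]
    simp only [Matrix.mul_apply, Matrix.diagonal_apply, Matrix.transpose_apply, ite_mul,
      zero_mul, Finset.sum_ite_eq, Finset.mem_univ, if_true]
    exact Finset.sum_congr rfl fun j _ => by split_ifs <;> ring
  set c : Fin n → ℝ := fun i => (Uᵀ * V) i i with hc
  have hcpos : ∀ i, 0 < c i := hUVpos
  have hC : Uᵀ * V = Matrix.diagonal c := (Matrix.IsDiag.diagonal_diag hUV).symm
  have hVTU : Vᵀ * U = Matrix.diagonal c := by
    have h := congrArg Matrix.transpose hC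
    simpa [Matrix.transpose_mul, Matrix.diagonal_transpose] using h
  have hVT : Vᵀ = Matrix.diagonal c * U⁻¹ := by
    rw [← hVTU, Matrix.mul_nonsing_inv_cancel_right _ _ hU]
  set e : Fin n → ℝ := fun i => (c i)⁻¹ with he
  have hid : U * (Matrix.diagonal e * Vᵀ) = 1 := by
    rw [hVT, ← Matrix.mul_assoc (Matrix.diagonal e), Matrix.diagonal_mul_diagonal, he]
    have h : (fun i => (c i)⁻¹ * c i) = fun _ => (1 : ℝ) := by
      funext i; exact inv_mul_cancel₀ (hcpos i).ne'
    rw [h, Matrix.diagonal_one, Matrix.one_mul, Matrix.mul_nonsing_inv _ hU]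
  have htr : M.trace = ∑ i, (Vᵀ * M * U) i i * e i := by
    conv_lhs => rw [← Matrix.mul_one M, ← hid]
    rw [show M * (U * (Matrix.diagonal e * Vᵀ)) = (M * U * Matrix.diagonal e) * Vᵀ by
      rw [Matrix.mul_assoc, Matrix.mul_assoc],
      Matrix.trace_mul_comm,
      show Vᵀ * (M * U * Matrix.diagonal e) = (Vᵀ * M * U) * Matrix.diagonal e by
      rw [Matrix.mul_assoc, Matrix.mul_assoc, Matrix.mul_assoc]]
    simp [Matrix.trace, Matrix.diag, Matrix.mul_diagonal]
  have hterm : ∀ i, 0 ≤ (Vᵀ * M * U) i i := by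
    intro i
    rw [hquad V U i]
    exact bform_nonneg m hm (fun j => V j i) (fun j => U j i) (hVrow i) (hUrow i)
      (by rw [← hquad V V i]; exact hVdiag i) (by rw [← hquad U U i]; exact hUdiag i)
  have htrnn : 0 ≤ M.trace := by
    rw [htr]
    exact Finset.sum_nonneg fun i _ =>
      mul_nonneg (hterm i) (inv_nonneg.mpr (hcpos i).le)
  refine ⟨htrnn, ?_⟩
  have htrval : M.trace = m 0 - ∑ i ∈ Finset.univ.erase 0, m i := by
    have hite : ∑ j ∈ Finset.univ.erase (0 : Fin n), (if j = 0 then m j else -(m j))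
        = -∑ j ∈ Finset.univ.erase (0 : Fin n), m j := by
      rw [← Finset.sum_neg_distrib]
      refine Finset.sum_congr rfl fun j hj => ?_
      rw [if_neg (Finset.ne_of_mem_erase hj)]
    rw [hM, Matrix.trace_diagonal,
      ← Finset.add_sum_erase _ _ (Finset.mem_univ (0 : Fin n)), if_pos rfl, hite]
    ring
  rw [htrval] at htrnn
  linarith
end

section
/- If 0 < α, β, γ < π/2 and β + γ > α + π/2, then with b = tan β, c = tan γ: bc > 1 and (bc - 1) cos α > (b + c) sin α. -/
open Real

/-- If `0 < α, β, γ < π/2` and `β + γ > α + π/2`, then with `b = tan β`, `c = tan γ`: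
`bc > 1` and `(bc - 1) cos α > (b + c) sin α`. -/
theorem tan_inequalities_of_angle_sum
    (α β γ : ℝ)
    (hα0 : 0 < α) (hα : α < π / 2)
    (hβ0 : 0 < β) (hβ : β < π / 2)
    (hγ0 : 0 < γ) (hγ : γ < π / 2)
    (hsum : β + γ > α + π / 2) :
    1 < Real.tan β * Real.tan γ ∧
    (Real.tan β * Real.tan γ - 1) * Real.cos α > (Real.tan β + Real.tan γ) * Real.sin α := by
  have hpi := Real.pi_pos
  have hcβ : 0 < Real.cos β := Real.cos_pos_of_mem_Ioo ⟨by linarith, hβ⟩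
  have hcγ : 0 < Real.cos γ := Real.cos_pos_of_mem_Ioo ⟨by linarith, hγ⟩
  have hcα : 0 < Real.cos α := Real.cos_pos_of_mem_Ioo ⟨by linarith, hα⟩
  have h1 : Real.cos (β + γ) < 0 :=
    Real.cos_neg_of_pi_div_two_lt_of_lt (by linarith) (by linarith)
  have h2 : Real.cos (β + γ - α) < 0 :=
    Real.cos_neg_of_pi_div_two_lt_of_lt (by linarith) (by linarith)
  rw [Real.cos_add] at h1
  rw [show β + γ - α = β + γ + (-α) by ring, Real.cos_add, Real.cos_add, Real.sin_add,
    Real.cos_neg, Real.sin_neg] at h2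
  rw [Real.tan_eq_sin_div_cos, Real.tan_eq_sin_div_cos]
  constructor
  · rw [div_mul_div_comm, lt_div_iff₀ (by positivity)]
    nlinarith
  · rw [div_mul_div_comm, div_add_div _ _ (ne_of_gt hcβ) (ne_of_gt hcγ), div_sub' (by positivity), div_mul_eq_mul_div, div_mul_eq_mul_div, gt_iff_lt, div_lt_div_iff₀ (by positivity) (by positivity)]
    nlinarith [Real.sin_pos_of_pos_of_lt_pi hα0 (by linarith), mul_pos hcβ hcγ]
end
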